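/- Let x₀, x₁ ∈ {0,1} and p₀, p₁, o₀ be real numbers with o₀ = p₀². Set u = x₀·x₁ and y = p₀·x₁. Then the 3×3 matrix with rows (x₁, u, y), (u, x₀, p₀), (y, p₀, o₀) is positive semidefinite, provided p₀ = p₀·x₀ (i.e., p₀ = 0 when x₀ = 0). -/

import Mathlib

theorem tsdp_unit_conic1 (x₀ x₁ p₀ o₀ u y : ℝ)
    (hx₀ : x₀ = 0 ∨ x₀ = 1) (hx₁ : x₁ = 0 ∨ x₁ = 1)
    (ho₀ : o₀ = p₀ ^ 2) (hp₀ : p₀ = p₀ * x₀)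
    (hu : u = x₀ * x₁) (hy : y = p₀ * x₁) :
    (!![x₁, u, y; u, x₀, p₀; y, p₀, o₀] : Matrix (Fin 3) (Fin 3) ℝ).PosSemidef := by
  subst hu hy ho₀
  rw [Matrix.posSemidef_iff_dotProduct_mulVec]
  constructor
  · ext i j
    fin_cases i <;> fin_cases j <;>
      simp [Matrix.conjTranspose_apply, Matrix.cons_val_zero, Matrix.cons_val_one,
        Matrix.head_cons, Matrix.cons_val_two, Matrix.tail_cons]
  · intro v
    rcases hx₀ with h0 | h0 <;> rcases hx₁ with h1 | h1 <;> subst h0 h1 <;>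
      simp only [Matrix.mulVec, dotProduct, Fin.sum_univ_three, Matrix.of_apply,
        Matrix.cons_val', Matrix.cons_val_zero, Matrix.cons_val_one, Matrix.head_cons,
        Matrix.cons_val_two, Matrix.tail_cons, Matrix.empty_val', Matrix.cons_val_fin_one,
        Matrix.head_fin_const, RCLike.star_def, Pi.star_apply, star_trivial]
    · rw [show p₀ = 0 by simpa using hp₀]; nlinarith [sq_nonneg (v 0)]
    · rw [show p₀ = 0 by simpa using hp₀]; nlinarith [sq_nonneg (v 0)]
    · nlinarith [sq_nonneg (v 1 + p₀ * v 2)]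
    · nlinarith [sq_nonneg (v 0 + v 1 + p₀ * v 2)]
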